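/- Let Z_1,...,Z_p be independent standard normal random variables and for θ with all θ_i > 0 let F(t;θ) be the distribution function of T_θ = Σ_{i=1}^p Z_i²/θ_i. Then for each i and every t > 0, the second partial derivative ∂²F(t;θ)/∂θ_i² is strictly negative; i.e., F(t;θ) is strictly concave in each coordinate θ_i. -/

import Mathlib

open MeasureTheory ProbabilityTheory Real

/-- Law of a vector of `p` i.i.d. standard normal random variables. -/
noncomputable def stdGaussianPi (p : ℕ) : Measure (Fin p → ℝ) :=
  Measure.pi fun _ => gaussianReal 0 1

/-- `F(t;θ) = P(∑ Z i ^ 2 / θ i ≤ t)` for i.i.d. standard normals `Z i`. -/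
noncomputable def Fcdf (p : ℕ) (θ : Fin p → ℝ) (t : ℝ) : ℝ :=
  (stdGaussianPi p {z | ∑ i, (z i) ^ 2 / θ i ≤ t}).toReal

namespace ChiSqAux

noncomputable def nu : Measure ℝ := gaussianReal 0 1
noncomputable def phi : ℝ → ℝ := gaussianPDFReal 0 1

instance : IsProbabilityMeasure nu := by unfold nu; infer_instance

lemma phi_pos (y : ℝ) : 0 < phi y := gaussianPDFReal_pos 0 1 y one_ne_zero
lemma phi_neg (y : ℝ) : phi (-y) = phi y := by simp [phi, gaussianPDFReal, neg_sq]
lemma phi_cont : Continuous phi := by unfold phi gaussianPDFReal; fun_prop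

instance : (gaussianReal (0:ℝ) (1:NNReal)).IsOpenPosMeasure := by
  constructor
  intro U hU hne h0
  rw [gaussianReal_apply 0 one_ne_zero] at h0
  rw [lintegral_eq_zero_iff (measurable_gaussianPDF 0 1)] at h0
  have h0' : (volume.restrict U) {x | gaussianPDF 0 1 x ≠ 0} = 0 := h0
  have huniv : {x : ℝ | gaussianPDF 0 1 x ≠ 0} = Set.univ := by
    ext x; simp [(gaussianPDF_pos 0 one_ne_zero x).ne']
  rw [huniv, Measure.restrict_apply_univ] at h0'
  exact (hU.measure_pos volume hne).ne' h0'

lemma phi_sqrt {c : ℝ} (hc : 0 ≤ c) :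
    phi (Real.sqrt c) = (Real.sqrt (2*π))⁻¹ * Real.exp (-c/2) := by
  unfold phi gaussianPDFReal
  rw [sub_zero, Real.sq_sqrt hc]
  norm_num

/-! ### The one-dimensional kernel `K` and its derivatives -/

noncomputable def K (x u : ℝ) : ℝ := (nu {y : ℝ | y ^ 2 ≤ x * u}).toReal

noncomputable def G (b : ℝ) : ℝ := ∫ y in (0:ℝ)..b, phi y

noncomputable def K1 (x u : ℝ) : ℝ :=
  if 0 < u then phi (Real.sqrt (x*u)) * (Real.sqrt u * (Real.sqrt x)⁻¹) else 0

noncomputable def K2 (x u : ℝ) : ℝ :=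
  if 0 < u then
    -((Real.sqrt (2*π))⁻¹ * Real.exp (-(x*u)/2) * Real.sqrt u *
      (u * (Real.sqrt x)⁻¹ + (Real.sqrt x)⁻¹ * x⁻¹) / 2)
  else 0

lemma set_eq (c : ℝ) (hc : 0 ≤ c) :
    {y : ℝ | y ^ 2 ≤ c} = Set.Icc (-Real.sqrt c) (Real.sqrt c) := by
  ext y
  simp only [Set.mem_setOf_eq, Set.mem_Icc, ← abs_le]
  constructor
  · intro h; exact Real.abs_le_sqrt h
  · intro h
    calc y ^ 2 = |y| ^ 2 := (sq_abs y).symm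
    _ ≤ (Real.sqrt c) ^ 2 := by
      have := abs_nonneg y
      gcongr
    _ = c := Real.sq_sqrt hc

lemma K_eq (x u : ℝ) (hxu : 0 ≤ x * u) :
    K x u = G (Real.sqrt (x * u)) - G (-Real.sqrt (x * u)) := by
  have h1 : nu {y : ℝ | y ^ 2 ≤ x * u}
      = ENNReal.ofReal (∫ y in Set.Icc (-Real.sqrt (x*u)) (Real.sqrt (x*u)), gaussianPDFReal 0 1 y) := by
    rw [nu, set_eq _ hxu, gaussianReal_apply_eq_integral 0 one_ne_zero]
  have h2 : (∫ y in Set.Icc (-Real.sqrt (x*u)) (Real.sqrt (x*u)), gaussianPDFReal 0 1 y)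
      = ∫ y in (-Real.sqrt (x*u))..(Real.sqrt (x*u)), phi y := by
    rw [intervalIntegral.integral_of_le (neg_nonpos.2 (Real.sqrt_nonneg _) |>.trans (Real.sqrt_nonneg _)),
      MeasureTheory.integral_Icc_eq_integral_Ioc]
    rfl
  have h3 : (∫ y in (-Real.sqrt (x*u))..(Real.sqrt (x*u)), phi y)
      = G (Real.sqrt (x*u)) - G (-Real.sqrt (x*u)) := by
    rw [G, G, ← intervalIntegral.integral_interval_sub_left
      (phi_cont.intervalIntegrable _ _) (phi_cont.intervalIntegrable _ _)]
  rw [K, h1, ENNReal.toReal_ofReal (MeasureTheory.setIntegral_nonneg measurableSet_Icc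
    fun y _ => gaussianPDFReal_nonneg 0 1 y), h2, h3]

lemma K_zero (x u : ℝ) (h : x * u ≤ 0) : K x u = 0 := by
  rcases lt_or_eq_of_le h with h | h
  · have : {y : ℝ | y ^ 2 ≤ x * u} = ∅ := by
      ext y; simp only [Set.mem_setOf_eq, Set.mem_empty_iff_false, iff_false, not_le]
      exact h.trans_le (sq_nonneg y)
    simp [K, this]
  · have : {y : ℝ | y ^ 2 ≤ x * u} = {0} := by
      ext y
      simp only [Set.mem_setOf_eq, Set.mem_singleton_iff, h]
      constructor
      · intro hy; exact pow_eq_zero_iff (n := 2) (by norm_num) |>.1 (le_antisymm hy (sq_nonneg y))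
      · rintro rfl; simp
    rw [K, this, nu, gaussianReal_apply 0 one_ne_zero]
    rw [setLIntegral_measure_zero _ _ (measure_singleton 0)]
    simp

lemma K_nonneg (x u : ℝ) : 0 ≤ K x u := ENNReal.toReal_nonneg

lemma K_le_one (x u : ℝ) : K x u ≤ 1 :=
  ENNReal.toReal_le_of_le_ofReal zero_le_one (by simpa using prob_le_one)

lemma hasDerivAt_G (b : ℝ) : HasDerivAt G (phi b) b :=
  intervalIntegral.integral_hasDerivAt_right (phi_cont.intervalIntegrable _ _)
    phi_cont.stronglyMeasurable.stronglyMeasurableAtFilter phi_cont.continuousAt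

lemma hasDerivAt_K {x : ℝ} (hx : 0 < x) (u : ℝ) :
    HasDerivAt (fun x => K x u) (K1 x u) x := by
  rcases le_or_gt u 0 with hu | hu
  · rw [K1, if_neg (not_lt.2 hu)]
    refine (hasDerivAt_const x (0:ℝ)).congr_of_eventuallyEq ?_
    filter_upwards [Ioi_mem_nhds hx] with x' hx'
    exact K_zero x' u (mul_nonpos_iff.2 (Or.inl ⟨le_of_lt hx', hu⟩))
  · have hxu : 0 < x * u := mul_pos hx hu
    set r := Real.sqrt (x*u) with hr_def
    have hr : 0 < r := Real.sqrt_pos.2 hxu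
    have hs : HasDerivAt (fun x' => Real.sqrt (x' * u)) (1/(2*r) * u) x :=
      (Real.hasDerivAt_sqrt hxu.ne').comp x (hasDerivAt_mul_const u)
    have hW : HasDerivAt (fun x' => G (Real.sqrt (x'*u)) - G (-Real.sqrt (x'*u)))
        (phi r * (1/(2*r) * u) - phi (-r) * (-(1/(2*r) * u))) x :=
      by have := ((hasDerivAt_G r).comp x hs).sub ((hasDerivAt_G (-r)).comp x hs.neg); exact this
    have heq : (fun x' => K x' u) =ᶠ[nhds x]
        fun x' => G (Real.sqrt (x'*u)) - G (-Real.sqrt (x'*u)) := by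
      filter_upwards [Ioi_mem_nhds hx] with x' hx'
      exact K_eq x' u (mul_nonneg (le_of_lt hx') hu.le)
    have h2 : u / r = Real.sqrt u * (Real.sqrt x)⁻¹ := by
      rw [hr_def, Real.sqrt_mul hx.le]
      rw [div_eq_iff (ne_of_gt (mul_pos (Real.sqrt_pos.2 hx) (Real.sqrt_pos.2 hu)))]
      have hxne : Real.sqrt x ≠ 0 := (Real.sqrt_pos.2 hx).ne'
      field_simp
      rw [Real.sq_sqrt hu.le]
    have hval : phi r * (1/(2*r) * u) - phi (-r) * (-(1/(2*r) * u)) = K1 x u := by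
      rw [K1, if_pos hu, phi_neg, ← h2]
      field_simp
      rw [mul_comm u x, ← hr_def]
      ring
    exact hval ▸ hW.congr_of_eventuallyEq heq

lemma hasDerivAt_K1 {x : ℝ} (hx : 0 < x) (u : ℝ) :
    HasDerivAt (fun x => K1 x u) (K2 x u) x := by
  rcases le_or_gt u 0 with hu | hu
  · have h0 : (fun x => K1 x u) = fun _ => (0:ℝ) := by
      funext x'; rw [K1, if_neg (not_lt.2 hu)]
    rw [K2, if_neg (not_lt.2 hu), h0]
    exact hasDerivAt_const x 0
  · set c' : ℝ := (Real.sqrt (2*π))⁻¹ with hc'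
    have hsx : Real.sqrt x ≠ 0 := (Real.sqrt_pos.2 hx).ne'
    have h_exp : HasDerivAt (fun x' => c' * Real.exp (-(x'*u)/2))
        (c' * (Real.exp (-(x*u)/2) * (-u/2))) x := by
      have hlin : HasDerivAt (fun x' : ℝ => -(x'*u)/2) (-u/2) x :=
        ((hasDerivAt_mul_const u).neg).div_const 2
      exact (hlin.exp).const_mul c'
    have h_inv : HasDerivAt (fun x' => Real.sqrt u * (Real.sqrt x')⁻¹)
        (Real.sqrt u * (-(1/(2*Real.sqrt x)) / (Real.sqrt x)^2)) x :=
      (((Real.hasDerivAt_sqrt hx.ne').inv hsx)).const_mul (Real.sqrt u)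
    have hV := h_exp.mul h_inv
    have heq : (fun x' => K1 x' u) =ᶠ[nhds x]
        fun x' => c' * Real.exp (-(x'*u)/2) * (Real.sqrt u * (Real.sqrt x')⁻¹) := by
      filter_upwards [Ioi_mem_nhds hx] with x' hx'
      rw [K1, if_pos hu, phi_sqrt (mul_nonneg hx'.le hu.le)]
    have hval : c' * (Real.exp (-(x*u)/2) * (-u/2)) * (Real.sqrt u * (Real.sqrt x)⁻¹)
        + c' * Real.exp (-(x*u)/2) * (Real.sqrt u * (-(1/(2*Real.sqrt x)) / (Real.sqrt x)^2))
        = K2 x u := by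
      rw [K2, if_pos hu]
      have key : ∀ c : ℝ, c * (Real.exp (-(x*u)/2) * (-u/2)) * (Real.sqrt u * (Real.sqrt x)⁻¹)
          + c * Real.exp (-(x*u)/2) * (Real.sqrt u * (-(1/(2*Real.sqrt x)) / (Real.sqrt x)^2))
          = -(c * Real.exp (-(x*u)/2) * Real.sqrt u *
              (u * (Real.sqrt x)⁻¹ + (Real.sqrt x)⁻¹ * x⁻¹) / 2) := by
        intro c
        rw [Real.sq_sqrt hx.le]
        field_simp
        ring
      exact key _
    exact hval ▸ hV.congr_of_eventuallyEq heq

/-! ### Sign and bounds -/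

lemma K2_nonpos (x u : ℝ) (hx : 0 < x) : K2 x u ≤ 0 := by
  rw [K2]
  split_ifs with hu
  · have h2 : (0:ℝ) < Real.sqrt u := Real.sqrt_pos.2 hu
    have h3 : (0:ℝ) < Real.sqrt x := Real.sqrt_pos.2 hx
    have : 0 < (Real.sqrt (2*π))⁻¹ * Real.exp (-(x*u)/2) * Real.sqrt u *
        (u * (Real.sqrt x)⁻¹ + (Real.sqrt x)⁻¹ * x⁻¹) / 2 := by positivity
    linarith
  · exact le_refl 0

lemma K2_neg (x u : ℝ) (hx : 0 < x) (hu : 0 < u) : K2 x u < 0 := by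
  rw [K2, if_pos hu]
  have h3 : (0:ℝ) < Real.sqrt x := Real.sqrt_pos.2 hx
  have h2 : (0:ℝ) < Real.sqrt u := Real.sqrt_pos.2 hu
  have : 0 < (Real.sqrt (2*π))⁻¹ * Real.exp (-(x*u)/2) * Real.sqrt u *
      (u * (Real.sqrt x)⁻¹ + (Real.sqrt x)⁻¹ * x⁻¹) / 2 := by positivity
  linarith

lemma aux_lin {b u : ℝ} (hb : 0 < b) (hu : 0 ≤ u) : u * Real.exp (-(b*u)) ≤ b⁻¹ := by
  rcases eq_or_lt_of_le hu with rfl | hu'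
  · simp; positivity
  · have h1 : b * u ≤ Real.exp (b*u) := (Real.add_one_le_exp (b*u)).trans' (by linarith [mul_pos hb hu'])
    rw [Real.exp_neg]
    rw [← div_eq_mul_inv, div_le_iff₀ (Real.exp_pos _)]
    calc u = b⁻¹ * (b * u) := by field_simp
    _ ≤ b⁻¹ * Real.exp (b*u) := by gcongr

lemma aux_sqrt {b u : ℝ} (hb : 0 < b) (hu : 0 ≤ u) :
    Real.sqrt u * Real.exp (-(b*u)) ≤ 1 + b⁻¹ := by
  have h1 : Real.sqrt u ≤ 1 + u := by
    rcases le_or_gt u 1 with h | h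
    · calc Real.sqrt u ≤ Real.sqrt 1 := Real.sqrt_le_sqrt h
      _ = 1 := Real.sqrt_one
      _ ≤ 1 + u := by linarith
    · calc Real.sqrt u ≤ Real.sqrt (u*u) := Real.sqrt_le_sqrt (by nlinarith)
      _ = u := Real.sqrt_mul_self (by linarith)
      _ ≤ 1 + u := by linarith
  calc Real.sqrt u * Real.exp (-(b*u)) ≤ (1+u) * Real.exp (-(b*u)) := by
        gcongr
  _ = Real.exp (-(b*u)) + u * Real.exp (-(b*u)) := by ring
  _ ≤ 1 + b⁻¹ := by
      have := aux_lin hb hu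
      have h2 : Real.exp (-(b*u)) ≤ 1 := Real.exp_le_one_iff.2 (by nlinarith)
      linarith

lemma aux_usqrt {b u : ℝ} (hb : 0 < b) (hu : 0 ≤ u) :
    u * Real.sqrt u * Real.exp (-(b*u)) ≤ (b/2)⁻¹ * (1 + (b/2)⁻¹) := by
  have hb2 : 0 < b/2 := by linarith
  have hsplit : Real.exp (-(b*u)) = Real.exp (-((b/2)*u)) * Real.exp (-((b/2)*u)) := by
    rw [← Real.exp_add]; ring_nf
  rw [hsplit]
  calc u * Real.sqrt u * (Real.exp (-((b/2)*u)) * Real.exp (-((b/2)*u)))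
      = (u * Real.exp (-((b/2)*u))) * (Real.sqrt u * Real.exp (-((b/2)*u))) := by ring
  _ ≤ (b/2)⁻¹ * (1 + (b/2)⁻¹) := by
      apply mul_le_mul (aux_lin hb2 hu) (aux_sqrt hb2 hu) (by positivity) (by positivity)

noncomputable def B1 (b : ℝ) : ℝ := (Real.sqrt (2*π))⁻¹ * ((1 + (b/2)⁻¹) * (Real.sqrt b)⁻¹)
noncomputable def B2 (b : ℝ) : ℝ :=
  (Real.sqrt (2*π))⁻¹ / 2 * ((((b/2)/2)⁻¹ * (1 + ((b/2)/2)⁻¹)) * (Real.sqrt b)⁻¹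
    + (1 + (b/2)⁻¹) * ((Real.sqrt b)⁻¹ * b⁻¹))

lemma K1_bound {b x : ℝ} (u : ℝ) (hb : 0 < b) (hx : b ≤ x) : |K1 x u| ≤ B1 b := by
  have hx0 : 0 < x := hb.trans_le hx
  have hsb : (0:ℝ) < Real.sqrt b := Real.sqrt_pos.2 hb
  rcases le_or_gt u 0 with hu | hu
  · rw [K1, if_neg (not_lt.2 hu), abs_zero, B1]; positivity
  · rw [K1, if_pos hu, phi_sqrt (mul_nonneg hx0.le hu.le)]
    rw [abs_of_nonneg (by positivity)]
    have hexp : Real.exp (-(x*u)/2) ≤ Real.exp (-((b/2)*u)) :=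
      Real.exp_le_exp.2 (by nlinarith)
    have hinv : (Real.sqrt x)⁻¹ ≤ (Real.sqrt b)⁻¹ := by gcongr
    calc (Real.sqrt (2*π))⁻¹ * Real.exp (-(x*u)/2) * (Real.sqrt u * (Real.sqrt x)⁻¹)
        ≤ (Real.sqrt (2*π))⁻¹ * Real.exp (-((b/2)*u)) * (Real.sqrt u * (Real.sqrt b)⁻¹) := by
          gcongr
    _ = (Real.sqrt (2*π))⁻¹ * ((Real.sqrt u * Real.exp (-((b/2)*u))) * (Real.sqrt b)⁻¹) := by ring
    _ ≤ (Real.sqrt (2*π))⁻¹ * ((1 + (b/2)⁻¹) * (Real.sqrt b)⁻¹) := by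
          gcongr
          exact aux_sqrt (by linarith) hu.le
    _ = B1 b := rfl

lemma K2_bound {b x : ℝ} (u : ℝ) (hb : 0 < b) (hx : b ≤ x) : |K2 x u| ≤ B2 b := by
  have hx0 : 0 < x := hb.trans_le hx
  have hsb : (0:ℝ) < Real.sqrt b := Real.sqrt_pos.2 hb
  rcases le_or_gt u 0 with hu | hu
  · rw [K2, if_neg (not_lt.2 hu), abs_zero, B2]; positivity
  · rw [abs_of_nonpos (K2_nonpos x u hx0), K2, if_pos hu, neg_neg]
    have hexp : Real.exp (-(x*u)/2) ≤ Real.exp (-((b/2)*u)) :=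
      Real.exp_le_exp.2 (by nlinarith)
    have hinv : (Real.sqrt x)⁻¹ ≤ (Real.sqrt b)⁻¹ := by gcongr
    have hinvx : x⁻¹ ≤ b⁻¹ := by gcongr
    calc (Real.sqrt (2*π))⁻¹ * Real.exp (-(x*u)/2) * Real.sqrt u *
          (u * (Real.sqrt x)⁻¹ + (Real.sqrt x)⁻¹ * x⁻¹) / 2
        = (Real.sqrt (2*π))⁻¹ / 2 * ((u * Real.sqrt u * Real.exp (-(x*u)/2)) * (Real.sqrt x)⁻¹
            + (Real.sqrt u * Real.exp (-(x*u)/2)) * ((Real.sqrt x)⁻¹ * x⁻¹)) := by ring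
    _ ≤ (Real.sqrt (2*π))⁻¹ / 2 * ((u * Real.sqrt u * Real.exp (-((b/2)*u))) * (Real.sqrt b)⁻¹
            + (Real.sqrt u * Real.exp (-((b/2)*u))) * ((Real.sqrt b)⁻¹ * b⁻¹)) := by
          gcongr
    _ ≤ (Real.sqrt (2*π))⁻¹ / 2 * ((((b/2)/2)⁻¹ * (1 + ((b/2)/2)⁻¹)) * (Real.sqrt b)⁻¹
            + (1 + (b/2)⁻¹) * ((Real.sqrt b)⁻¹ * b⁻¹)) := by
          have h1 := aux_usqrt (show (0:ℝ) < b/2 by linarith) hu.le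
          have h2 := aux_sqrt (show (0:ℝ) < b/2 by linarith) hu.le
          gcongr
    _ = B2 b := rfl

/-! ### Measurability of the kernels -/

lemma K_monotone {x : ℝ} (hx : 0 ≤ x) : Monotone (fun u => nu {y : ℝ | y ^ 2 ≤ x * u}) := by
  intro u₁ u₂ h
  apply measure_mono
  intro y hy
  simp only [Set.mem_setOf_eq] at hy ⊢
  nlinarith

lemma K1_measurable (x : ℝ) : Measurable (fun u => K1 x u) := by
  unfold K1
  apply Measurable.ite
  · exact measurableSet_lt measurable_const measurable_id
  · apply Measurable.mul
    · exact phi_cont.measurable.comp (Real.continuous_sqrt.measurable.comp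
        (measurable_id.const_mul x))
    · exact (Real.continuous_sqrt.measurable.mul_const _)
  · exact measurable_const

lemma K2_measurable (x : ℝ) : Measurable (fun u => K2 x u) := by
  unfold K2
  apply Measurable.ite
  · exact measurableSet_lt measurable_const measurable_id
  · apply Measurable.neg
    apply Measurable.div_const
    apply Measurable.mul
    · apply Measurable.mul
      · exact ((measurable_id.const_mul x).neg.div_const 2).exp.const_mul _
      · exact Real.continuous_sqrt.measurable
    · exact (measurable_id.mul_const _).add_const _
  · exact measurable_const

/-! ### Fubini representation -/

noncomputable def mu (n : ℕ) : Measure (Fin n → ℝ) := Measure.pi fun _ => gaussianReal 0 1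

instance (n : ℕ) : IsProbabilityMeasure (mu n) := by unfold mu; infer_instance
instance (n : ℕ) : (mu n).IsOpenPosMeasure := by unfold mu; infer_instance

noncomputable def S {n : ℕ} (θ : Fin (n+1) → ℝ) (i : Fin (n+1)) (z' : Fin n → ℝ) : ℝ :=
  ∑ j, (z' j) ^ 2 / θ (i.succAbove j)

lemma S_meas {n : ℕ} (θ : Fin (n+1) → ℝ) (i : Fin (n+1)) : Measurable (S θ i) := by
  apply Finset.measurable_sum
  intro j _
  exact ((measurable_pi_apply j).pow_const 2).div_const _

lemma S_cont {n : ℕ} (θ : Fin (n+1) → ℝ) (i : Fin (n+1)) : Continuous (S θ i) := by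
  apply continuous_finset_sum
  intro j _
  exact ((continuous_apply j).pow 2).div_const _

lemma fcdf_repr {n : ℕ} (θ : Fin (n+1) → ℝ) (i : Fin (n+1)) (t : ℝ) (x : ℝ) (hx : 0 < x) :
    Fcdf (n+1) (Function.update θ i x) t
      = ∫ z', K x (t - S θ i z') ∂(mu n) := by
  have hSmeas : MeasurableSet {z : Fin (n+1) → ℝ | ∑ j, (z j) ^ 2 / Function.update θ i x j ≤ t} := by
    apply measurableSet_le _ measurable_const
    apply Finset.measurable_sum
    intro j _
    exact ((measurable_pi_apply j).pow_const 2).div_const _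
  have hpres := (measurePreserving_piFinSuccAbove (fun _ : Fin (n+1) => gaussianReal 0 1) i).symm
  have h1 : stdGaussianPi (n+1) {z | ∑ j, (z j) ^ 2 / Function.update θ i x j ≤ t}
      = (nu.prod (mu n)) ((MeasurableEquiv.piFinSuccAbove (fun _ => ℝ) i).symm ⁻¹'
          {z | ∑ j, (z j) ^ 2 / Function.update θ i x j ≤ t}) := by
    rw [stdGaussianPi]
    exact (hpres.measure_preimage hSmeas.nullMeasurableSet).symm
  have h2 : ((MeasurableEquiv.piFinSuccAbove (fun _ => ℝ) i).symm ⁻¹'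
          {z | ∑ j, (z j) ^ 2 / Function.update θ i x j ≤ t})
      = {q : ℝ × (Fin n → ℝ) | q.1 ^ 2 ≤ x * (t - S θ i q.2)} := by
    ext ⟨y, z'⟩
    simp only [Set.mem_preimage, Set.mem_setOf_eq, MeasurableEquiv.piFinSuccAbove_symm_apply]
    rw [Fin.sum_univ_succAbove (fun j => ((Fin.insertNthEquiv (fun _ => ℝ) i (y, z')) j) ^ 2
      / Function.update θ i x j) i]
    simp only [Fin.insertNthEquiv_apply, Fin.insertNth_apply_same, Fin.insertNth_apply_succAbove,
      Function.update_self, Function.update_of_ne (Fin.succAbove_ne i _)]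
    rw [S, ← le_sub_iff_add_le, div_le_iff₀ hx, mul_comm]
  have h3 : (nu.prod (mu n)) {q : ℝ × (Fin n → ℝ) | q.1 ^ 2 ≤ x * (t - S θ i q.2)}
      = ∫⁻ z', nu {y : ℝ | y ^ 2 ≤ x * (t - S θ i z')} ∂(mu n) := by
    rw [Measure.prod_apply_symm]
    · rfl
    · apply measurableSet_le
      · exact (measurable_fst.pow_const 2)
      · exact (measurable_const.sub ((S_meas θ i).comp measurable_snd)).const_mul x
  have haem : AEMeasurable (fun z' => nu {y : ℝ | y ^ 2 ≤ x * (t - S θ i z')}) (mu n) :=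
    ((K_monotone hx.le).measurable.comp (measurable_const.sub (S_meas θ i))).aemeasurable
  rw [Fcdf, h1, h2, h3, ← MeasureTheory.integral_toReal haem
    (ae_of_all _ fun z' => measure_lt_top _ _)]
  rfl

lemma K_comp_meas {n : ℕ} (θ : Fin (n+1) → ℝ) (i : Fin (n+1)) (t : ℝ) {x : ℝ} (hx : 0 < x) :
    AEStronglyMeasurable (fun z' => K x (t - S θ i z')) (mu n) := by
  have : Measurable (fun z' => K x (t - S θ i z')) :=
    (ENNReal.measurable_toReal.comp (K_monotone hx.le).measurable).comp
      (measurable_const.sub (S_meas θ i))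
  exact this.aestronglyMeasurable

end ChiSqAux

open ChiSqAux in
/-- the second partial derivative of `F(t;θ)` in each `θ i` is strictly
negative, i.e. `F(t;θ)` is strictly concave in each coordinate. -/
theorem second_partial_deriv_Fcdf_neg (p : ℕ) (θ : Fin p → ℝ) (hθ : ∀ i, 0 < θ i)
    (i : Fin p) (t : ℝ) (ht : 0 < t) :
    deriv (deriv (fun x => Fcdf p (Function.update θ i x) t)) (θ i) < 0 := by
  rcases p with _ | n
  · exact i.elim0
  set a := θ i with ha_def
  have ha : 0 < a := hθ i
  have hb : (0:ℝ) < a/2 := by linarith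
  have hε : (0:ℝ) < a/4 := by linarith
  -- x ∈ ball a (a/2) is positive and ≥ a/2
  have hball : ∀ x ∈ Metric.ball a (a/2), a/2 ≤ x := by
    intro x hx
    rw [Metric.mem_ball, Real.dist_eq, abs_lt] at hx
    linarith [hx.1]
  set g : ℝ → ℝ := fun x => ∫ z', K x (t - S θ i z') ∂(mu n) with hg_def
  set g1 : ℝ → ℝ := fun x => ∫ z', K1 x (t - S θ i z') ∂(mu n) with hg1_def
  -- first derivative
  have hg : ∀ x₀ ∈ Metric.ball a (a/4), HasDerivAt g (g1 x₀) x₀ := by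
    intro x₀ hx₀
    have hx₀ball : x₀ ∈ Metric.ball a (a/2) :=
      Metric.ball_subset_ball (by linarith) hx₀
    have hx₀pos : 0 < x₀ := lt_of_lt_of_le hb (hball _ hx₀ball)
    have hsub : Metric.ball x₀ (a/4) ⊆ Metric.ball a (a/2) := by
      intro y hy
      rw [Metric.mem_ball] at hy hx₀ ⊢
      calc dist y a ≤ dist y x₀ + dist x₀ a := dist_triangle _ _ _
      _ < a/4 + a/4 := by exact add_lt_add hy hx₀
      _ = a/2 := by ring
    refine (hasDerivAt_integral_of_dominated_loc_of_deriv_le (Metric.ball_mem_nhds _ hε)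
      (F := fun x z' => K x (t - S θ i z')) (F' := fun x z' => K1 x (t - S θ i z'))
      (bound := fun _ => B1 (a/2)) ?_ ?_ ?_ ?_ ?_ ?_).2
    · filter_upwards [Ioi_mem_nhds hx₀pos] with x hx
      exact K_comp_meas θ i t hx
    · refine (integrable_const (1:ℝ)).mono' (K_comp_meas θ i t hx₀pos) ?_
      filter_upwards with z'
      rw [Real.norm_eq_abs, abs_of_nonneg (K_nonneg _ _)]
      exact K_le_one _ _
    · exact (((K1_measurable x₀).comp (measurable_const.sub (S_meas θ i))).aestronglyMeasurable)
    · filter_upwards with z' x hx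
      exact K1_bound _ hb (hball _ (hsub hx))
    · exact integrable_const _
    · filter_upwards with z' x hx
      exact hasDerivAt_K (lt_of_lt_of_le hb (hball _ (hsub hx))) _
  -- second derivative
  have hg1 : HasDerivAt g1 (∫ z', K2 a (t - S θ i z') ∂(mu n)) a := by
    have haball : a ∈ Metric.ball a (a/4) := Metric.mem_ball_self hε
    have hsub : Metric.ball a (a/4) ⊆ Metric.ball a (a/2) :=
      Metric.ball_subset_ball (by linarith)
    exact (hasDerivAt_integral_of_dominated_loc_of_deriv_le (Metric.ball_mem_nhds _ hε)
      (F := fun x z' => K1 x (t - S θ i z')) (F' := fun x z' => K2 x (t - S θ i z'))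
      (bound := fun _ => B2 (a/2))
      (by
        filter_upwards with x
        exact ((K1_measurable x).comp (measurable_const.sub (S_meas θ i))).aestronglyMeasurable)
      (by
        refine (integrable_const (B1 (a/2))).mono'
          (((K1_measurable a).comp (measurable_const.sub (S_meas θ i))).aestronglyMeasurable) ?_
        filter_upwards with z'
        exact K1_bound _ hb (hball _ (Metric.mem_ball_self (by linarith))))
      (((K2_measurable a).comp (measurable_const.sub (S_meas θ i))).aestronglyMeasurable)
      (by
        filter_upwards with z' x hx
        exact K2_bound _ hb (hball _ (hsub hx)))
      (integrable_const _)
      (by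
        filter_upwards with z' x hx
        exact hasDerivAt_K1 (lt_of_lt_of_le hb (hball _ (hsub hx))) _)).2
  -- rewrite the double derivative
  have hfg : (fun x => Fcdf (n+1) (Function.update θ i x) t) =ᶠ[nhds a] g := by
    filter_upwards [Ioi_mem_nhds ha] with x hx
    exact fcdf_repr θ i t x hx
  have hderiv1 : deriv (fun x => Fcdf (n+1) (Function.update θ i x) t) =ᶠ[nhds a] deriv g :=
    hfg.deriv
  have hderiv2 : deriv g =ᶠ[nhds a] g1 := by
    filter_upwards [Metric.ball_mem_nhds a hε] with x hx
    exact (hg x hx).deriv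
  have hEq : deriv (deriv (fun x => Fcdf (n+1) (Function.update θ i x) t)) a
      = ∫ z', K2 a (t - S θ i z') ∂(mu n) := by
    rw [hderiv1.deriv_eq, (hderiv2.deriv_eq : deriv (deriv g) a = deriv g1 a), hg1.deriv]
  rw [hEq]
  -- strict negativity of the integral
  have hint2 : Integrable (fun z' => K2 a (t - S θ i z')) (mu n) := by
    refine (integrable_const (B2 (a/2))).mono'
      (((K2_measurable a).comp (measurable_const.sub (S_meas θ i))).aestronglyMeasurable) ?_
    filter_upwards with z'
    exact K2_bound _ hb (hball _ (Metric.mem_ball_self (by linarith)))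
  have hU : 0 < (mu n) {z' | S θ i z' < t} := by
    have hopen : IsOpen {z' : Fin n → ℝ | S θ i z' < t} :=
      isOpen_lt (S_cont θ i) continuous_const
    have hne : {z' : Fin n → ℝ | S θ i z' < t}.Nonempty := by
      refine ⟨0, ?_⟩
      simp only [Set.mem_setOf_eq, S]
      simpa using ht
    exact hopen.measure_pos (mu n) hne
  have hpos : 0 < ∫ z', -(K2 a (t - S θ i z')) ∂(mu n) := by
    rw [MeasureTheory.integral_pos_iff_support_of_nonneg_ae]
    · refine lt_of_lt_of_le hU (measure_mono ?_)
      intro z' hz'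
      simp only [Set.mem_setOf_eq] at hz'
      simp only [Function.mem_support, neg_ne_zero]
      exact (K2_neg a _ ha (by linarith)).ne
    · filter_upwards with z'
      simp only [Pi.zero_apply, Left.nonneg_neg_iff]
      exact K2_nonpos _ _ ha
    · exact hint2.neg
  rw [← neg_neg (∫ z', K2 a (t - S θ i z') ∂(mu n)), ← MeasureTheory.integral_neg]
  linarith
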